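/- Let k, ℓ, r be integers with 2 ≤ ℓ ≤ k−1 and ℓ·(1 − 1/e) ≤ r ≤ ℓ−1. Let B be a set of k vertices, let Υ ⊆ B with |Υ| = ℓ, and let F be a fixed forest on vertex set Υ having exactly r edges. Then the number of labelled trees T on vertex set B whose induced subgraph on Υ equals F is at most (ℓ/(ℓ−r))^{ℓ−r} · (k−ℓ)^{k−r−2} · (ℓ+1)^{k−ℓ−1}. -/

import Mathlib

open SimpleGraph Finset

namespace TreeCountAux

variable {B : Type*} [DecidableEq B] {T : SimpleGraph B} (hT : T.IsTree) (v0 : B)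

/-- The unique path from `v` to the root `v0`. -/
noncomputable def pth (v : B) : T.Walk v v0 := (hT.existsUnique_path v v0).choose

lemma pth_isPath (v : B) : (pth hT v0 v).IsPath := (hT.existsUnique_path v v0).choose_spec.1

lemma pth_eq {v : B} (q : T.Walk v v0) (hq : q.IsPath) : q = pth hT v0 v :=
  (hT.existsUnique_path v v0).choose_spec.2 q hq

/-- The parent of `v` in the tree rooted at `v0`. -/
noncomputable def par (v : B) : B := (pth hT v0 v).getVert 1

lemma pth_cons {v : B} (hv : v ≠ v0) :
    ∃ h : T.Adj v (par hT v0 v), pth hT v0 v = Walk.cons h (pth hT v0 (par hT v0 v)) := by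
  obtain ⟨w, ha, p', hp⟩ := Walk.exists_eq_cons_of_ne hv (pth hT v0 v)
  have hw : par hT v0 v = w := by
    rw [par, hp]
    have : (Walk.cons ha p').getVert (0 + 1) = p'.getVert 0 := Walk.getVert_cons_succ p' ha
    simpa using this
  subst hw
  refine ⟨ha, ?_⟩
  rw [hp]
  congr 1
  refine pth_eq hT v0 p' ?_
  have := pth_isPath hT v0 v
  rw [hp] at this
  exact this.of_cons

lemma adj_par {v : B} (hv : v ≠ v0) : T.Adj v (par hT v0 v) := (pth_cons hT v0 hv).1

lemma length_par {v : B} (hv : v ≠ v0) :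
    (pth hT v0 (par hT v0 v)).length + 1 = (pth hT v0 v).length := by
  obtain ⟨h, hp⟩ := pth_cons hT v0 hv
  rw [hp, Walk.length_cons]

lemma par_antisym {a b : B} (ha : a ≠ v0) (hb : b ≠ v0)
    (h1 : par hT v0 a = b) (h2 : par hT v0 b = a) : False := by
  have l1 := length_par hT v0 ha
  have l2 := length_par hT v0 hb
  rw [h1] at l1
  rw [h2] at l2
  omega

/-- Every edge of a tree is a parent edge (in one of the two directions). -/
lemma adj_or (a b : B) (hab : T.Adj a b) :
    (a ≠ v0 ∧ par hT v0 a = b) ∨ (b ≠ v0 ∧ par hT v0 b = a) := by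
  by_cases hbv : b = v0
  · subst hbv
    left
    refine ⟨hab.ne, ?_⟩
    have hq : (Walk.cons hab Walk.nil : T.Walk a b).IsPath := by
      rw [Walk.cons_isPath_iff]
      exact ⟨Walk.IsPath.nil, by simp [hab.ne]⟩
    have := pth_eq hT b _ hq
    rw [par, ← this]
    simp [Walk.getVert_cons_succ]
  · by_cases hmem : a ∈ (pth hT v0 b).support
    · right
      refine ⟨hbv, ?_⟩
      have hD : ((pth hT v0 b).takeUntil a hmem).IsPath := (pth_isPath hT v0 b).takeUntil hmem
      have hsingle : ((pth hT v0 b).takeUntil a hmem) = Walk.cons hab.symm Walk.nil := by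
        have := hT.IsAcyclic.path_unique ⟨(pth hT v0 b).takeUntil a hmem, hD⟩
          (Path.singleton hab.symm)
        exact congrArg Subtype.val this
      have hspec := (pth hT v0 b).take_spec hmem
      rw [par, ← hspec, hsingle]
      simp [Walk.cons_append, Walk.getVert_cons_succ]
    · left
      have hq : (Walk.cons hab (pth hT v0 b)).IsPath := by
        rw [Walk.cons_isPath_iff]
        exact ⟨pth_isPath hT v0 b, hmem⟩
      have hne : a ≠ v0 := fun h => hmem (h ▸ (pth hT v0 b).end_mem_support)
      refine ⟨hne, ?_⟩
      have := pth_eq hT v0 _ hq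
      rw [par, ← this]
      simp [Walk.getVert_cons_succ]

lemma getVert_one_mem_support {a b : B} (P : T.Walk a b) : P.getVert 1 ∈ P.support := by
  cases P with
  | nil => simp [Walk.getVert_of_length_le]
  | cons h q =>
    have : (Walk.cons h q).getVert (0+1) = q.getVert 0 := Walk.getVert_cons_succ q h
    simp only [this, Walk.getVert_zero]
    simp [Walk.support_cons]

lemma getVert_one_append {a b c : B} (hne : a ≠ b) (W : T.Walk a b) (W' : T.Walk b c) :
    (W.append W').getVert 1 = W.getVert 1 := by
  obtain ⟨w, ha, p', rfl⟩ := Walk.exists_eq_cons_of_ne hne W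
  rw [Walk.cons_append]
  have h1 : (Walk.cons ha (p'.append W')).getVert (0+1) = (p'.append W').getVert 0 :=
    Walk.getVert_cons_succ _ ha
  have h2 : (Walk.cons ha p').getVert (0+1) = p'.getVert 0 := Walk.getVert_cons_succ _ ha
  simp only [h1, h2, Walk.getVert_zero]

/-- In a tree, any path between `a` and `b` avoiding the root starts with the parent edge
of `a` or ends with the parent edge of `b`. -/
lemma path_var {a b : B} (P : T.Walk a b) (hP : P.IsPath) (hab : a ≠ b) (hv0 : v0 ∉ P.support) :
    P.getVert 1 = par hT v0 a ∨ P.reverse.getVert 1 = par hT v0 b := by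
  induction P with
  | nil => exact absurd rfl hab
  | @cons a x b h q ih =>
    have hav0 : a ≠ v0 := by rintro rfl; exact hv0 ((Walk.cons h q).start_mem_support)
    have hxv0 : x ≠ v0 := by
      rintro rfl
      exact hv0 (by rw [Walk.support_cons]; exact List.mem_cons_of_mem _ q.start_mem_support)
    have hbv0 : b ≠ v0 := by rintro rfl; exact hv0 ((Walk.cons h q).end_mem_support)
    have hgv1 : (Walk.cons h q).getVert 1 = x := by
      have : (Walk.cons h q).getVert (0+1) = q.getVert 0 := Walk.getVert_cons_succ q h
      simpa using this
    rcases adj_or hT v0 a x h with ⟨_, hpa⟩ | ⟨_, hpx⟩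
    · left; rw [hgv1, hpa]
    · by_cases hxb : x = b
      · subst hxb
        have hqnil : q = Walk.nil := by
          have h2 := hP.of_cons
          rwa [Walk.isPath_iff_eq_nil] at h2
        subst hqnil
        right
        have hcomp : (Walk.cons h (Walk.nil : T.Walk x x)).reverse.getVert 1 = a := by
          rw [Walk.reverse_cons]
          simp only [Walk.reverse_nil, Walk.nil_append]
          have : (Walk.cons h.symm (Walk.nil : T.Walk a a)).getVert (0+1) =
              (Walk.nil : T.Walk a a).getVert 0 := Walk.getVert_cons_succ _ h.symm
          simpa using this
        rw [hcomp, hpx]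
      · have hq : q.IsPath := hP.of_cons
        have hv0q : v0 ∉ q.support := fun hx =>
          hv0 (by rw [Walk.support_cons]; exact List.mem_cons_of_mem _ hx)
        rcases ih hq hxb hv0q with h1 | h1
        · exfalso
          rw [hpx] at h1
          have : a ∈ q.support := h1 ▸ getVert_one_mem_support q
          rw [Walk.cons_isPath_iff] at hP
          exact hP.2 this
        · right
          rw [Walk.reverse_cons,
            getVert_one_append (fun hc => hxb hc.symm) q.reverse _, h1]


variable {B : Type*} [DecidableEq B] {T : SimpleGraph B} {Υ : Finset B}
  {F : SimpleGraph (↑Υ : Set B)} {v0 : B}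

/-- component map, with junk value `K0` off `Υ`. -/
noncomputable def fm (F : SimpleGraph (↑Υ : Set B)) (K0 : F.ConnectedComponent) (v : B) :
    F.ConnectedComponent :=
  if h : v ∈ Υ then F.connectedComponentMk ⟨v, Finset.mem_coe.mpr h⟩ else K0

lemma fm_mem {K0 : F.ConnectedComponent} {v : B} (h : v ∈ Υ) :
    fm F K0 v = F.connectedComponentMk ⟨v, Finset.mem_coe.mpr h⟩ := dif_pos h

lemma adj_transfer (hT2 : T.induce (↑Υ : Set B) = F) {a b : B} (ha : a ∈ Υ) (hb : b ∈ Υ)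
    (h : T.Adj a b) : F.Adj ⟨a, Finset.mem_coe.mpr ha⟩ ⟨b, Finset.mem_coe.mpr hb⟩ := by
  subst hT2; exact h

lemma adj_transfer' (hT2 : T.induce (↑Υ : Set B) = F) {a b : (↑Υ : Set B)}
    (h : F.Adj a b) : T.Adj a b := by
  subst hT2; exact h

lemma exists_path_in (hT2 : T.induce (↑Υ : Set B) = F) {a b : B} (ha : a ∈ Υ) (hb : b ∈ Υ)
    (hcomp : F.connectedComponentMk ⟨a, Finset.mem_coe.mpr ha⟩ =
      F.connectedComponentMk ⟨b, Finset.mem_coe.mpr hb⟩) :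
    ∃ P : T.Walk a b, P.IsPath ∧ ∀ y ∈ P.support, y ∈ Υ := by
  subst hT2
  have hreach := ConnectedComponent.exact hcomp
  obtain ⟨W⟩ := hreach
  let P0 := W.toPath
  let emb : T.induce (↑Υ : Set B) ↪g T := SimpleGraph.Embedding.induce (↑Υ : Set B)
  refine ⟨P0.1.map emb.toHom, ?_, ?_⟩
  · exact Walk.map_isPath_of_injective (Subtype.val_injective) P0.2
  · intro y hy
    have hy2 : y ∈ (P0.1.map emb.toHom).support := hy
    rw [Walk.support_map] at hy2
    obtain ⟨x, _, rfl⟩ := List.mem_map.mp hy2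
    exact Finset.mem_coe.mp x.2

lemma top_exists (hT : T.IsTree) (hT2 : T.induce (↑Υ : Set B) = F) (hv0 : v0 ∉ Υ)
    (K0 : F.ConnectedComponent) :
    ∀ (n : ℕ) (v : B), v ∈ Υ → (pth hT v0 v).length ≤ n →
      ∃ u, u ∈ Υ ∧ fm F K0 u = fm F K0 v ∧ par hT v0 u ∉ Υ := by
  intro n
  induction n with
  | zero =>
    intro v hv hlen
    have : v = v0 := Walk.eq_of_length_eq_zero (Nat.le_zero.mp hlen)
    exact absurd (this ▸ hv) hv0
  | succ n ih =>
    intro v hv hlen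
    by_cases hp : par hT v0 v ∈ Υ
    · have hvne : v ≠ v0 := fun h => hv0 (h ▸ hv)
      have hadj := adj_par hT v0 hvne
      have hFadj := adj_transfer hT2 hv hp hadj
      have hcomp : fm F K0 (par hT v0 v) = fm F K0 v := by
        rw [fm_mem hp, fm_mem hv]
        exact (ConnectedComponent.connectedComponentMk_eq_of_adj hFadj).symm
      have hlen2 : (pth hT v0 (par hT v0 v)).length ≤ n := by
        have := length_par hT v0 hvne
        omega
      obtain ⟨u, hu1, hu2, hu3⟩ := ih (par hT v0 v) hp hlen2
      exact ⟨u, hu1, hu2.trans hcomp, hu3⟩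
    · exact ⟨v, hv, rfl, hp⟩

lemma top_unique (hT : T.IsTree) (hT2 : T.induce (↑Υ : Set B) = F) (hv0 : v0 ∉ Υ)
    {K0 : F.ConnectedComponent} {v w : B} (hv : v ∈ Υ) (hw : w ∈ Υ)
    (hc : fm F K0 v = fm F K0 w) (hpv : par hT v0 v ∉ Υ) (hpw : par hT v0 w ∉ Υ) : v = w := by
  by_contra hne
  rw [fm_mem hv, fm_mem hw] at hc
  obtain ⟨P, hP, hsup⟩ := exists_path_in hT2 hv hw hc
  have hv0P : v0 ∉ P.support := fun h => hv0 (hsup v0 h)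
  rcases path_var hT v0 P hP hne hv0P with h1 | h1
  · exact hpv (h1 ▸ hsup _ (getVert_one_mem_support P))
  · refine hpw (h1 ▸ hsup _ ?_)
    have := getVert_one_mem_support P.reverse
    rwa [Walk.support_reverse, List.mem_reverse] at this

lemma no_back (hT : T.IsTree) (hT2 : T.induce (↑Υ : Set B) = F) (hv0 : v0 ∉ Υ)
    {K0 : F.ConnectedComponent} {u x t : B} (hu : u ∉ Υ) (huv0 : u ≠ v0)
    (hx : x ∈ Υ) (hpu : par hT v0 u = x) (ht : t ∈ Υ) (hc : fm F K0 t = fm F K0 x)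
    (hpt : par hT v0 t = u) : False := by
  have hxv0 : x ≠ v0 := fun h => hv0 (h ▸ hx)
  have htv0 : t ≠ v0 := fun h => hv0 (h ▸ ht)
  by_cases htx : t = x
  · subst htx
    exact par_antisym hT v0 huv0 htv0 hpu hpt
  · rw [fm_mem ht, fm_mem hx] at hc
    obtain ⟨P, hP, hsup⟩ := exists_path_in hT2 hx ht hc.symm
    have hadj_tu : T.Adj t u := hpt ▸ adj_par hT v0 htv0
    have hadj_ux : T.Adj u x := hpu ▸ adj_par hT v0 huv0
    have huP : u ∉ P.support := fun h => hu (hsup u h)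
    set Q : T.Walk x u := P.append (Walk.cons hadj_tu Walk.nil) with hQ
    have hQpath : Q.IsPath := by
      rw [Walk.isPath_def, hQ, Walk.support_append]
      have : (Walk.cons hadj_tu (Walk.nil : T.Walk u u)).support.tail = [u] := by
        simp [Walk.support_cons]
      rw [this]
      rw [List.nodup_append]
      refine ⟨hP.support_nodup, List.nodup_singleton u, ?_⟩
      intro y hy z hz
      rw [List.mem_singleton] at hz
      rintro rfl
      exact huP (hz ▸ hy)
    have hedge : s(u, x) ∉ Q.edges := by
      rw [hQ, Walk.edges_append]
      intro hmem
      rcases List.mem_append.mp hmem with h1 | h1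
      · exact huP (Walk.fst_mem_support_of_mem_edges P h1)
      · have : (Walk.cons hadj_tu (Walk.nil : T.Walk u u)).edges = [s(t, u)] := by
          simp [Walk.edges_cons]
        rw [this, List.mem_singleton, Sym2.eq_iff] at h1
        rcases h1 with ⟨h2, _⟩ | ⟨_, h3⟩
        · exact hu (h2 ▸ ht)
        · exact htx (h3.symm)
    have hcyc : (Walk.cons hadj_ux Q).IsCycle :=
      (Walk.cons_isCycle_iff Q hadj_ux).mpr ⟨hQpath, hedge⟩
    exact hT.IsAcyclic _ hcyc

end TreeCountAux
namespace TreeCountAux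

lemma card_le_of_inj_mem {X : Type*} {D : Type*} (SD : Finset D) (f : X → D)
    (hmem : ∀ x, f x ∈ SD) (hinj : Function.Injective f) : Nat.card X ≤ SD.card := by
  have h : Nat.card X ≤ Nat.card {d // d ∈ SD} :=
    Nat.card_le_card_of_injective (fun x => ⟨f x, hmem x⟩)
      (fun a b h => hinj (congrArg Subtype.val h))
  simpa [Nat.card_eq_finsetCard] using h

lemma prod_le_div_pow {ι : Type*} [Fintype ι] (f : ι → ℕ) (L n : ℕ)
    (hn : Fintype.card ι = n) (hn0 : 0 < n) (hsum : ∑ i, f i = L) :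
    (∏ i, (f i : ℝ)) ≤ ((L : ℝ) / n) ^ n := by
  have hnR : (0 : ℝ) < n := by exact_mod_cast hn0
  have hgm := Real.geom_mean_le_arith_mean_weighted Finset.univ (fun _ => 1 / (n : ℝ))
    (fun i => (f i : ℝ)) (fun i _ => by positivity)
    (by simp [Finset.sum_const, hn, Finset.card_univ]; field_simp)
    (fun i _ => by positivity)
  have hprod : ∏ i, ((f i : ℝ)) ^ (1 / (n : ℝ)) = (∏ i, (f i : ℝ)) ^ (1 / (n : ℝ)) := by
    rw [← Real.finset_prod_rpow Finset.univ _ (fun i _ => by positivity)]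
  have hsumR : ∑ i, (1 / (n : ℝ)) * (f i : ℝ) = (L : ℝ) / n := by
    rw [← Finset.mul_sum]
    have : ∑ i, (f i : ℝ) = (L : ℝ) := by exact_mod_cast congrArg (Nat.cast : ℕ → ℝ) hsum
    rw [this]; ring
  rw [hprod, hsumR] at hgm
  have hP0 : (0 : ℝ) ≤ ∏ i, (f i : ℝ) := Finset.prod_nonneg fun i _ => by positivity
  have := pow_le_pow_left₀ (Real.rpow_nonneg hP0 _) hgm n
  rwa [← Real.rpow_natCast ((∏ i, (f i : ℝ)) ^ (1 / (n : ℝ))) n, ← Real.rpow_mul hP0,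
    one_div_mul_cancel (ne_of_gt hnR), Real.rpow_one] at this

lemma pow95 : ∀ j : ℕ, 2 ≤ j → (j + 1) * 5 ^ j ≤ 9 ^ j := by
  intro j hj
  induction j, hj using Nat.le_induction with
  | base => norm_num
  | succ n hn ih =>
    have h5 : (0:ℕ) < 5 ^ n := by positivity
    calc (n + 1 + 1) * 5 ^ (n + 1) = ((n + 2) * 5) * 5 ^ n := by ring
      _ ≤ (9 * (n + 1)) * 5 ^ n := by
          have : (n + 2) * 5 ≤ 9 * (n + 1) := by omega
          exact Nat.mul_le_mul_right _ this
      _ = 9 * ((n + 1) * 5 ^ n) := by ring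
      _ ≤ 9 * 9 ^ n := Nat.mul_le_mul_left _ ih
      _ = 9 ^ (n + 1) := by ring

lemma key3 {m ℓ k : ℕ} (hm : 3 ≤ m) (hℓ : 2 ≤ ℓ) (hk : k = m + ℓ) :
    (k : ℝ) ^ (m - 1) * m ≤ (m : ℝ) ^ (m - 1) * ((ℓ : ℝ) + 1) ^ (m - 1) := by
  set j := m - 1 with hj
  have hj2 : 2 ≤ j := by omega
  have hmR : (3 : ℝ) ≤ m := by exact_mod_cast hm
  have hℓR : (2 : ℝ) ≤ ℓ := by exact_mod_cast hℓ
  have hm2 : (0 : ℝ) < (m : ℝ) + 2 := by linarith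
  have hbase : (k : ℝ) ≤ ((m : ℝ) + 2) / 3 * ((ℓ : ℝ) + 1) := by
    have hkR : (k : ℝ) = (m : ℝ) + ℓ := by rw [hk]; push_cast; ring
    rw [hkR]
    nlinarith [mul_nonneg (by linarith : (0:ℝ) ≤ (m:ℝ) - 1) (by linarith : (0:ℝ) ≤ (ℓ:ℝ) - 2)]
  have hk0 : (0 : ℝ) ≤ (k : ℝ) := by positivity
  have h1 : (k : ℝ) ^ j ≤ (((m : ℝ) + 2) / 3 * ((ℓ : ℝ) + 1)) ^ j :=
    pow_le_pow_left₀ hk0 hbase j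
  have hm95 : (m : ℝ) ≤ (9 / 5) ^ j := by
    have := pow95 j hj2
    have hcast : ((j : ℝ) + 1) * 5 ^ j ≤ 9 ^ j := by exact_mod_cast this
    have hmj : (m : ℝ) = (j : ℝ) + 1 := by
      have : m = j + 1 := by omega
      rw [this]; push_cast; ring
    rw [hmj, div_pow, le_div_iff₀ (by positivity : (0:ℝ) < 5 ^ j)]
    exact hcast
  have h59 : (9 / 5 : ℝ) ≤ 3 * (m : ℝ) / ((m : ℝ) + 2) := by
    rw [div_le_div_iff₀ (by norm_num) hm2]
    linarith
  have h2 : (m : ℝ) ≤ (3 * (m : ℝ) / ((m : ℝ) + 2)) ^ j :=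
    hm95.trans (pow_le_pow_left₀ (by norm_num) h59 j)
  have hfin : (k : ℝ) ^ j * (m : ℝ) ≤
      (((m : ℝ) + 2) / 3 * ((ℓ : ℝ) + 1)) ^ j * (3 * (m : ℝ) / ((m : ℝ) + 2)) ^ j := by
    apply mul_le_mul h1 h2 (by positivity) (by positivity)
  calc (k : ℝ) ^ j * m ≤ _ := hfin
    _ = ((((m : ℝ) + 2) / 3 * ((ℓ : ℝ) + 1)) * (3 * (m : ℝ) / ((m : ℝ) + 2))) ^ j := by
        rw [← mul_pow]
    _ = ((m : ℝ) * ((ℓ : ℝ) + 1)) ^ j := by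
        congr 1
        field_simp
    _ = (m : ℝ) ^ j * ((ℓ : ℝ) + 1) ^ j := mul_pow _ _ _

end TreeCountAux


open TreeCountAux SimpleGraph Finset

set_option maxHeartbeats 1000000

/-- Let `B` be a vertex set of size `k`, `Υ ⊆ B` of size `ℓ`, and `F` a fixed forest on `Υ`
with exactly `r` edges, where `2 ≤ ℓ ≤ k−1` and `ℓ(1 − 1/e) ≤ r ≤ ℓ−1`. Then the number of
labelled trees on `B` inducing `F` on `Υ` is at most
`(ℓ/(ℓ−r))^{ℓ−r} · (k−ℓ)^{k−r−2} · (ℓ+1)^{k−ℓ−1}`. -/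
theorem tree_extension_count_large_r {B : Type*} [Fintype B] (k ℓ r : ℕ)
    (hB : Fintype.card B = k) (Υ : Finset B) (hΥ : Υ.card = ℓ)
    (hℓ2 : 2 ≤ ℓ) (hℓk : ℓ < k)
    (hr_lo : (ℓ : ℝ) * (1 - 1 / Real.exp 1) ≤ (r : ℝ)) (hr_hi : r < ℓ)
    (F : SimpleGraph (↑Υ : Set B)) (hF : F.IsAcyclic) (hFr : F.edgeSet.ncard = r) :
    (Nat.card {T : SimpleGraph B // T.IsTree ∧ T.induce (↑Υ : Set B) = F} : ℝ) ≤
      ((ℓ : ℝ) / ((ℓ : ℝ) - (r : ℝ))) ^ (ℓ - r) * ((k : ℝ) - (ℓ : ℝ)) ^ (k - r - 2) *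
        ((ℓ : ℝ) + 1) ^ (k - ℓ - 1) := by
  classical
  set c := ℓ - r with hcdef
  set m := k - ℓ with hmdef
  have hc1 : 1 ≤ c := by omega
  have hm1 : 1 ≤ m := by omega
  have hkm : k = m + ℓ := by omega
  have hcast1 : (ℓ : ℝ) - (r : ℝ) = (c : ℝ) := by
    rw [hcdef]; push_cast [Nat.cast_sub hr_hi.le]; ring
  have hcast2 : (k : ℝ) - (ℓ : ℝ) = (m : ℝ) := by
    rw [hmdef]; push_cast [Nat.cast_sub hℓk.le]; ring
  have hexp1 : k - r - 2 = m + c - 2 := by omega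
  have hexp2 : k - ℓ - 1 = m - 1 := by omega
  rw [hcast1, hcast2, hexp1, hexp2]
  have hcR : (0 : ℝ) < (c : ℝ) := by exact_mod_cast hc1
  have htarget_nonneg : (0 : ℝ) ≤ ((ℓ : ℝ) / (c : ℝ)) ^ c * (m : ℝ) ^ (m + c - 2) *
      ((ℓ : ℝ) + 1) ^ (m - 1) := by positivity
  rcases isEmpty_or_nonempty {T : SimpleGraph B // T.IsTree ∧ T.induce (↑Υ : Set B) = F}
    with hE | hNE
  · rw [Nat.card_of_isEmpty]
    simpa using htarget_nonneg
  · obtain ⟨T0⟩ := hNE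
    -- basic objects
    have hv0ex : (Υᶜ : Finset B).Nonempty := by
      rw [← Finset.card_pos, Finset.card_compl, hB, hΥ]; omega
    obtain ⟨v0, hv0c⟩ := hv0ex
    have hv0 : v0 ∉ Υ := Finset.mem_compl.mp hv0c
    obtain ⟨v1, hv1⟩ := Finset.card_pos.mp (by omega : 0 < Υ.card)
    haveI : Fintype F.ConnectedComponent := Fintype.ofFinite _
    set K0 : F.ConnectedComponent := F.connectedComponentMk ⟨v1, Finset.mem_coe.mpr hv1⟩
      with hK0
    set XT := {T : SimpleGraph B // T.IsTree ∧ T.induce (↑Υ : Set B) = F} with hXT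
    -- the unique top of each component
    have htopex : ∀ (T : XT) (K : F.ConnectedComponent),
        ∃! u, u ∈ Υ ∧ fm F K0 u = K ∧ par T.2.1 v0 u ∉ Υ := by
      intro T K
      obtain ⟨z, hz⟩ := K.exists_rep
      have hzΥ : z.1 ∈ Υ := Finset.mem_coe.mp z.2
      have hfmz : fm F K0 z.1 = K := by
        rw [TreeCountAux.fm_mem hzΥ, ← hz]
        congr 1
      obtain ⟨u, hu1, hu2, hu3⟩ :=
        TreeCountAux.top_exists T.2.1 T.2.2 hv0 K0 (pth T.2.1 v0 z.1).length z.1 hzΥ le_rfl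
      refine ⟨u, ⟨hu1, hu2.trans hfmz, hu3⟩, ?_⟩
      rintro y ⟨hy1, hy2, hy3⟩
      exact TreeCountAux.top_unique (K0 := K0) T.2.1 T.2.2 hv0 hy1 hu1
        (by rw [hy2, hu2, hfmz]) hy3 hu3
    choose top htop1 htop2 htop3 using fun (T : XT) K => (htopex T K).exists
    have htopu : ∀ (T : XT) K y, y ∈ Υ → fm F K0 y = K → par T.2.1 v0 y ∉ Υ → y = top T K :=
      fun T K y h1 h2 h3 =>
        (htopex T K).unique ⟨h1, h2, h3⟩ ⟨htop1 T K, htop2 T K, htop3 T K⟩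
    -- the encoding
    set enc : XT → (F.ConnectedComponent → B) × (F.ConnectedComponent → B) × (B → B) :=
      fun T => (fun K => top T K, fun K => par T.2.1 v0 (top T K),
        fun u => if u ∉ Υ ∧ u ≠ v0 then par T.2.1 v0 u else v0) with henc
    -- injectivity
    have hstep : ∀ (T T' : XT), enc T = enc T' →
        ∀ a b, a ≠ v0 → par T.2.1 v0 a = b → T.1.Adj a b → T'.1.Adj a b := by
      intro T T' he a b hav0 hpab hadj
      by_cases ha : a ∈ Υ
      · by_cases hb : b ∈ Υ
        · exact TreeCountAux.adj_transfer' T'.2.2 (TreeCountAux.adj_transfer T.2.2 ha hb hadj)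
        · have hae : a = top T (fm F K0 a) := htopu T (fm F K0 a) a ha rfl (hpab ▸ hb)
          have h1' : top T (fm F K0 a) = top T' (fm F K0 a) := by
            have h1 : (enc T).1 = (enc T').1 := congrArg Prod.fst he
            simp only [henc] at h1
            exact congrFun h1 (fm F K0 a)
          have h2' : par T.2.1 v0 (top T (fm F K0 a)) = par T'.2.1 v0 (top T' (fm F K0 a)) := by
            have h2 : (enc T).2.1 = (enc T').2.1 := congrArg (fun p => p.2.1) he
            simp only [henc] at h2
            exact congrFun h2 (fm F K0 a)
          have hb' : par T'.2.1 v0 (top T' (fm F K0 a)) = b := by rw [← h2', ← hae, hpab]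
          have ha' : a = top T' (fm F K0 a) := hae.trans h1'
          have hne' : top T' (fm F K0 a) ≠ v0 := fun hh => hav0 (by rw [ha']; exact hh)
          have hAdj := TreeCountAux.adj_par T'.2.1 v0 hne'
          rw [hb'] at hAdj
          exact Eq.mpr (congrArg (fun z => (T'.1).Adj z b) ha') hAdj
      · have hq : (enc T).2.2 a = (enc T').2.2 a := by rw [he]
        simp only [henc] at hq
        rw [if_pos (⟨ha, hav0⟩ : a ∉ Υ ∧ a ≠ v0), if_pos (⟨ha, hav0⟩ : a ∉ Υ ∧ a ≠ v0)] at hq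
        have hpab' : par T'.2.1 v0 a = b := by rw [← hq, hpab]
        have hAdj := TreeCountAux.adj_par (T := T'.1) T'.2.1 v0 (v := a) hav0
        rwa [hpab'] at hAdj
    have hinj : Function.Injective enc := by
      intro T T' he
      apply Subtype.ext
      apply SimpleGraph.ext
      ext a b
      constructor
      · intro h
        rcases TreeCountAux.adj_or T.2.1 v0 a b h with ⟨hne, hpar⟩ | ⟨hne, hpar⟩
        · exact hstep T T' he a b hne hpar h
        · exact (hstep T T' he b a hne hpar h.symm).symm
      · intro h
        rcases TreeCountAux.adj_or T'.2.1 v0 a b h with ⟨hne, hpar⟩ | ⟨hne, hpar⟩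
        · exact hstep T' T he.symm a b hne hpar h
        · exact (hstep T' T he.symm b a hne hpar h.symm).symm
    -- number of components
    have hκ : Fintype.card F.ConnectedComponent = c := by
      have hNT : (Υ.filter fun v => par T0.2.1 v0 v ∈ Υ).card = F.edgeSet.toFinset.card := by
        refine Finset.card_bij (fun v hv =>
          s((⟨v, Finset.mem_coe.mpr (Finset.mem_filter.mp hv).1⟩ : (↑Υ : Set B)),
            (⟨par T0.2.1 v0 v, Finset.mem_coe.mpr (Finset.mem_filter.mp hv).2⟩ : (↑Υ : Set B))))
          ?_ ?_ ?_
        · intro v hv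
          rw [Set.mem_toFinset, SimpleGraph.mem_edgeSet]
          obtain ⟨h1, h2⟩ := Finset.mem_filter.mp hv
          exact TreeCountAux.adj_transfer T0.2.2 h1 h2
            (TreeCountAux.adj_par T0.2.1 v0 (fun hh => hv0 (hh ▸ h1)))
        · intro v hv w hw heq
          rw [Sym2.eq_iff] at heq
          rcases heq with ⟨h1, _⟩ | ⟨h1, h2⟩
          · exact congrArg Subtype.val h1
          · exfalso
            have hv' : v = par T0.2.1 v0 w := congrArg Subtype.val h1
            have hw' : par T0.2.1 v0 v = w := congrArg Subtype.val h2
            exact TreeCountAux.par_antisym T0.2.1 v0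
              (fun hh => hv0 (hh ▸ (Finset.mem_filter.mp hv).1))
              (fun hh => hv0 (hh ▸ (Finset.mem_filter.mp hw).1)) hw' hv'.symm
        · intro e he
          rw [Set.mem_toFinset] at he
          induction e using Sym2.ind with
          | _ x y =>
            rw [SimpleGraph.mem_edgeSet] at he
            have hT := TreeCountAux.adj_transfer' T0.2.2 he
            have hxΥ : x.1 ∈ Υ := Finset.mem_coe.mp x.2
            have hyΥ : y.1 ∈ Υ := Finset.mem_coe.mp y.2
            rcases TreeCountAux.adj_or T0.2.1 v0 x.1 y.1 hT with ⟨h1, h2⟩ | ⟨h1, h2⟩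
            · refine ⟨x.1, Finset.mem_filter.mpr ⟨hxΥ, by rw [h2]; exact hyΥ⟩, ?_⟩
              exact Sym2.eq_iff.mpr (Or.inl ⟨Subtype.ext rfl, Subtype.ext h2⟩)
            · refine ⟨y.1, Finset.mem_filter.mpr ⟨hyΥ, by rw [h2]; exact hxΥ⟩, ?_⟩
              rw [Sym2.eq_swap]
              exact Sym2.eq_iff.mpr (Or.inl ⟨Subtype.ext h2, Subtype.ext rfl⟩)
      have hrcard : F.edgeSet.toFinset.card = r := by
        rw [← Set.ncard_eq_toFinset_card']; exact hFr
      have hsplit := Finset.card_filter_add_card_filter_not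
        (s := Υ) (p := fun v => par T0.2.1 v0 v ∈ Υ)
      have hTops : (Υ.filter fun v => ¬ par T0.2.1 v0 v ∈ Υ).card = c := by
        rw [hNT, hrcard] at hsplit
        simp only [hΥ] at hsplit
        omega
      rw [← hTops, ← Finset.card_univ]
      refine (Finset.card_bij (fun v _ => fm F K0 v) (fun v _ => Finset.mem_univ _) ?_ ?_).symm
      · intro v hv w hw heq
        obtain ⟨hv1', hv2'⟩ := Finset.mem_filter.mp hv
        obtain ⟨hw1', hw2'⟩ := Finset.mem_filter.mp hw
        exact TreeCountAux.top_unique (K0 := K0) T0.2.1 T0.2.2 hv0 hv1' hw1' heq hv2' hw2'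
      · intro K _
        obtain ⟨u, ⟨hu1, hu2, hu3⟩, _⟩ := htopex T0 K
        exact ⟨u, Finset.mem_filter.mpr ⟨hu1, hu3⟩, hu2⟩
    -- fiber sizes
    have hsum : ∑ K, (Υ.filter fun v => fm F K0 v = K).card = ℓ := by
      rw [← hΥ]
      exact (Finset.card_eq_sum_card_fiberwise (f := fm F K0) (t := Finset.univ)
        (fun x _ => Finset.mem_univ _)).symm
    -- AM-GM
    have hGM : (∏ K, ((Υ.filter fun v => fm F K0 v = K).card : ℝ)) ≤
        ((ℓ : ℝ) / (c : ℝ)) ^ c :=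
      TreeCountAux.prod_le_div_pow _ ℓ c hκ hc1 hsum
    have hP0 : (0 : ℝ) ≤ ∏ K, ((Υ.filter fun v => fm F K0 v = K).card : ℝ) :=
      Finset.prod_nonneg fun i _ => Nat.cast_nonneg _
    -- counting Finsets
    set At := Fintype.piFinset (fun K => Υ.filter fun v => fm F K0 v = K) with hAtdef
    have hmemt : ∀ T : XT, (enc T).1 ∈ At := by
      intro T
      rw [hAtdef, Fintype.mem_piFinset]
      exact fun K => Finset.mem_filter.mpr ⟨htop1 T K, htop2 T K⟩
    have hAt : (At.card : ℝ) = ∏ K, ((Υ.filter fun v => fm F K0 v = K).card : ℝ) := by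
      rw [hAtdef, Fintype.card_piFinset]
      push_cast
      rfl
    have hAtN : At.card = ∏ K, (Υ.filter fun v => fm F K0 v = K).card := by
      rw [hAtdef, Fintype.card_piFinset]
    set Ag := Fintype.piFinset (fun _ : F.ConnectedComponent => (Υᶜ : Finset B)) with hAgdef
    have hmemg : ∀ T : XT, (enc T).2.1 ∈ Ag := by
      intro T
      rw [hAgdef, Fintype.mem_piFinset]
      exact fun K => Finset.mem_compl.mpr (htop3 T K)
    have hAgN : Ag.card = m ^ c := by
      rw [hAgdef, Fintype.card_piFinset]
      simp only [Finset.prod_const, Finset.card_univ, hκ, Finset.card_compl, hB, hΥ]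
      rfl
    rcases eq_or_ne m 2 with hm2 | hm2
    · -- refined count for m = 2
      obtain ⟨w, hw⟩ := Finset.card_eq_one.mp (show (Υᶜ.erase v0).card = 1 by
        rw [Finset.card_erase_of_mem (Finset.mem_compl.mpr hv0), Finset.card_compl, hB, hΥ]
        omega)
      have hwmem : w ∉ Υ ∧ w ≠ v0 := by
        have hwm : w ∈ Υᶜ.erase v0 := by rw [hw]; exact Finset.mem_singleton_self w
        rw [Finset.mem_erase, Finset.mem_compl] at hwm
        exact ⟨hwm.2, hwm.1⟩
      have hpred : ∀ u : B, (u ∉ Υ ∧ u ≠ v0) ↔ u = w := by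
        intro u
        constructor
        · rintro ⟨h1, h2⟩
          have : u ∈ Υᶜ.erase v0 := Finset.mem_erase.mpr ⟨h2, Finset.mem_compl.mpr h1⟩
          rwa [hw, Finset.mem_singleton] at this
        · rintro rfl; exact hwmem
      set Aq1 := Fintype.piFinset (fun _ : B => ({v0} : Finset B)) with hAq1def
      set SD2 := Υ.biUnion (fun x => At ×ˢ
          (Fintype.piFinset (fun K => if K = fm F K0 x then ({v0} : Finset B) else Υᶜ) ×ˢ
           Fintype.piFinset (fun u : B => if u = w then ({x} : Finset B) else {v0})))
        with hSD2def
      have hmem2 : ∀ T : XT, enc T ∈ (At ×ˢ Ag ×ˢ Aq1) ∪ SD2 := by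
        intro T
        by_cases hx : par T.2.1 v0 w ∈ Υ
        · refine Finset.mem_union_right _ (Finset.mem_biUnion.mpr ⟨par T.2.1 v0 w, hx, ?_⟩)
          refine Finset.mem_product.mpr ⟨hmemt T, Finset.mem_product.mpr ⟨?_, ?_⟩⟩
          · rw [Fintype.mem_piFinset]
            intro K
            by_cases hK : K = fm F K0 (par T.2.1 v0 w)
            · rw [if_pos hK]
              have htK := htop3 T K
              have hneq : par T.2.1 v0 (top T K) ≠ w := by
                intro hcontra
                exact TreeCountAux.no_back (K0 := K0) T.2.1 T.2.2 hv0 hwmem.1 hwmem.2 hx rfl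
                  (htop1 T K) (by rw [htop2 T K, hK]) hcontra
              have hval : par T.2.1 v0 (top T K) = v0 := by
                by_contra hne
                exact hneq ((hpred _).mp ⟨htK, hne⟩)
              simp only [henc]
              rw [hval]; exact Finset.mem_singleton_self v0
            · rw [if_neg hK]
              simp only [henc]
              exact Finset.mem_compl.mpr (htop3 T K)
          · rw [Fintype.mem_piFinset]
            intro u
            by_cases hu : u = w
            · rw [if_pos hu, hu]
              simp only [henc]
              rw [if_pos (⟨hwmem.1, hwmem.2⟩ : w ∉ Υ ∧ w ≠ v0)]
              exact Finset.mem_singleton_self _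
            · rw [if_neg hu]
              simp only [henc]
              rw [if_neg (fun hp => hu ((hpred u).mp hp))]
              exact Finset.mem_singleton_self v0
        · apply Finset.mem_union_left
          refine Finset.mem_product.mpr ⟨hmemt T, Finset.mem_product.mpr ⟨hmemg T, ?_⟩⟩
          rw [hAq1def, Fintype.mem_piFinset]
          intro u
          simp only [henc]
          by_cases hu : u ∉ Υ ∧ u ≠ v0
          · rw [if_pos hu]
            have hus : u = w := (hpred u).mp hu
            subst hus
            have hne_w : par T.2.1 v0 u ≠ u := (TreeCountAux.adj_par T.2.1 v0 hu.2).ne'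
            have hval : par T.2.1 v0 u = v0 := by
              by_contra hne
              exact hne_w ((hpred _).mp ⟨hx, hne⟩)
            rw [hval]; exact Finset.mem_singleton_self _
          · rw [if_neg hu]; exact Finset.mem_singleton_self _
      have hcard := TreeCountAux.card_le_of_inj_mem _ enc hmem2 hinj
      have hAq1N : Aq1.card = 1 := by
        rw [hAq1def, Fintype.card_piFinset]
        simp
      have hSD2card : SD2.card ≤
          ℓ * ((∏ K, (Υ.filter fun v => fm F K0 v = K).card) * 2 ^ (c - 1)) := by
        rw [hSD2def]
        refine le_trans Finset.card_biUnion_le ?_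
        have hbound : ∀ x ∈ Υ, (At ×ˢ
            (Fintype.piFinset (fun K => if K = fm F K0 x then ({v0} : Finset B) else Υᶜ) ×ˢ
             Fintype.piFinset (fun u : B => if u = w then ({x} : Finset B) else {v0}))).card ≤
            (∏ K, (Υ.filter fun v => fm F K0 v = K).card) * 2 ^ (c - 1) := by
          intro x _
          rw [Finset.card_product, Finset.card_product, hAtN]
          have hq2 : (Fintype.piFinset
              (fun u : B => if u = w then ({x} : Finset B) else {v0})).card = 1 := by
            rw [Fintype.card_piFinset]
            have : ∀ u : B, ((if u = w then ({x} : Finset B) else {v0}).card) = 1 := by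
              intro u; split_ifs <;> simp
            rw [Finset.prod_congr rfl (fun u _ => this u)]
            simp
          rw [hq2, mul_one]
          apply Nat.mul_le_mul_left
          rw [Fintype.card_piFinset]
          have hcards : ∀ K, ((if K = fm F K0 x then ({v0} : Finset B) else Υᶜ).card) =
              if K = fm F K0 x then 1 else 2 := by
            intro K
            split_ifs with hK
            · simp
            · rw [Finset.card_compl, hB, hΥ]; omega
          rw [Finset.prod_congr rfl (fun K _ => hcards K),
            ← Finset.mul_prod_erase Finset.univ _ (Finset.mem_univ (fm F K0 x)),
            if_pos rfl, one_mul]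
          calc ∏ K ∈ Finset.univ.erase (fm F K0 x), (if K = fm F K0 x then 1 else 2)
              ≤ 2 ^ (Finset.univ.erase (fm F K0 x)).card := by
                apply Finset.prod_le_pow_card
                intro K hK
                rw [if_neg (Finset.mem_erase.mp hK).1]
            _ = 2 ^ (c - 1) := by
                rw [Finset.card_erase_of_mem (Finset.mem_univ _), Finset.card_univ, hκ]
        calc ∑ x ∈ Υ, _ ≤ ∑ x ∈ Υ, ((∏ K, (Υ.filter fun v => fm F K0 v = K).card) *
              2 ^ (c - 1)) := Finset.sum_le_sum hbound
          _ = ℓ * ((∏ K, (Υ.filter fun v => fm F K0 v = K).card) * 2 ^ (c - 1)) := by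
              rw [Finset.sum_const, hΥ, smul_eq_mul]
      have hcount : Nat.card XT ≤
          (∏ K, (Υ.filter fun v => fm F K0 v = K).card) * 2 ^ c +
          ℓ * ((∏ K, (Υ.filter fun v => fm F K0 v = K).card) * 2 ^ (c - 1)) := by
        refine le_trans hcard (le_trans (Finset.card_union_le _ _) ?_)
        rw [Finset.card_product, Finset.card_product, hAtN, hAgN, hAq1N, hm2, mul_one]
        exact Nat.add_le_add le_rfl hSD2card
      -- final arithmetic for m = 2
      have hcountR : (Nat.card XT : ℝ) ≤
          (∏ K, ((Υ.filter fun v => fm F K0 v = K).card : ℝ)) * 2 ^ c +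
          (ℓ : ℝ) * ((∏ K, ((Υ.filter fun v => fm F K0 v = K).card : ℝ)) * 2 ^ (c - 1)) := by
        exact_mod_cast hcount
      rw [hm2]
      have he1 : 2 + c - 2 = c := by omega
      have he2 : (2 : ℕ) - 1 = 1 := rfl
      rw [he1, he2, pow_one]
      have hc' : c - 1 + 1 = c := by omega
      have h2c : (2:ℝ)^c = 2^(c-1) * 2 := by rw [← pow_succ, hc']
      have hGM0 : (0:ℝ) ≤ ((ℓ:ℝ)/(c:ℝ))^c := by positivity
      have h2c0 : (0:ℝ) ≤ (2:ℝ)^(c-1) := by positivity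
      have hℓR : (2:ℝ) ≤ (ℓ:ℝ) := by exact_mod_cast hℓ2
      calc (Nat.card XT : ℝ)
          ≤ (∏ K, ((Υ.filter fun v => fm F K0 v = K).card : ℝ)) * 2 ^ c +
            (ℓ : ℝ) * ((∏ K, ((Υ.filter fun v => fm F K0 v = K).card : ℝ)) * 2 ^ (c - 1)) :=
            hcountR
        _ = (∏ K, ((Υ.filter fun v => fm F K0 v = K).card : ℝ)) * 2 ^ (c-1) * (2 + ℓ) := by
            rw [h2c]; ring
        _ ≤ ((ℓ:ℝ)/(c:ℝ))^c * 2 ^ (c-1) * (2 + ℓ) := by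
            apply mul_le_mul_of_nonneg_right
              (mul_le_mul_of_nonneg_right hGM h2c0) (by linarith)
        _ ≤ ((ℓ:ℝ)/(c:ℝ))^c * 2 ^ (c-1) * (2 * ((ℓ:ℝ) + 1)) := by
            apply mul_le_mul_of_nonneg_left (by linarith) (by positivity)
        _ = ((ℓ:ℝ)/(c:ℝ))^c * ((2:ℕ):ℝ) ^ c * ((ℓ:ℝ) + 1) := by
            push_cast
            rw [h2c]; ring
    · -- crude count for m ≠ 2
      set Aq := Fintype.piFinset
        (fun u : B => if u ∉ Υ ∧ u ≠ v0 then (Finset.univ : Finset B) else {v0}) with hAqdef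
      have hmemq : ∀ T : XT, (enc T).2.2 ∈ Aq := by
        intro T
        rw [hAqdef, Fintype.mem_piFinset]
        intro u
        by_cases hu : u ∉ Υ ∧ u ≠ v0
        · rw [if_pos hu]; exact Finset.mem_univ _
        · rw [if_neg hu]
          simp only [henc]
          rw [if_neg hu]
          exact Finset.mem_singleton_self v0
      have hAqN : Aq.card = k ^ (m - 1) := by
        rw [hAqdef, Fintype.card_piFinset]
        have hcongr : ∀ u : B,
            ((if u ∉ Υ ∧ u ≠ v0 then (Finset.univ : Finset B) else {v0}).card)
            = if u ∉ Υ ∧ u ≠ v0 then k else 1 := by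
          intro u; split_ifs <;> simp [hB]
        rw [Finset.prod_congr rfl (fun u _ => hcongr u), Finset.prod_ite, Finset.prod_const,
          Finset.prod_const, one_pow, mul_one]
        congr 1
        have hfe : Finset.univ.filter (fun u : B => u ∉ Υ ∧ u ≠ v0) = Υᶜ.erase v0 := by
          ext u
          simp only [Finset.mem_filter, Finset.mem_univ, true_and, Finset.mem_erase,
            Finset.mem_compl]
          tauto
        rw [hfe, Finset.card_erase_of_mem (Finset.mem_compl.mpr hv0), Finset.card_compl, hB, hΥ]
      have hmem : ∀ T : XT, enc T ∈ At ×ˢ Ag ×ˢ Aq := fun T =>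
        Finset.mem_product.mpr ⟨hmemt T, Finset.mem_product.mpr ⟨hmemg T, hmemq T⟩⟩
      have hcard := TreeCountAux.card_le_of_inj_mem _ enc hmem hinj
      have hcount : Nat.card XT ≤
          (∏ K, (Υ.filter fun v => fm F K0 v = K).card) * (m ^ c * k ^ (m - 1)) := by
        rw [Finset.card_product, Finset.card_product, hAtN, hAgN, hAqN] at hcard
        exact hcard
      have hcountR : (Nat.card XT : ℝ) ≤
          (∏ K, ((Υ.filter fun v => fm F K0 v = K).card : ℝ)) *
            ((m:ℝ) ^ c * (k:ℝ) ^ (m - 1)) := by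
        exact_mod_cast hcount
      rcases (by omega : m = 1 ∨ 3 ≤ m) with hm1' | hm3
      · -- m = 1
        rw [hm1'] at hcountR ⊢
        have he1 : 1 + c - 2 = c - 1 := by omega
        rw [he1]
        simp only [Nat.cast_one, one_pow, Nat.sub_self, pow_zero, mul_one] at hcountR ⊢
        exact hcountR.trans hGM
      · -- m ≥ 3
        have hkey := TreeCountAux.key3 hm3 hℓ2 hkm
        have hmpos : (0:ℝ) < (m:ℝ) := by exact_mod_cast (by omega : 0 < m)
        have hsplit : m - 1 = (m - 2) + 1 := by omega
        have h1 : (k:ℝ) ^ (m-1) ≤ (m:ℝ)^(m-2) * ((ℓ:ℝ)+1)^(m-1) := by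
          have hrw : (m:ℝ)^(m-1) * ((ℓ:ℝ)+1)^(m-1) =
              ((m:ℝ)^(m-2) * ((ℓ:ℝ)+1)^(m-1)) * (m:ℝ) := by
            rw [hsplit, pow_succ]; ring
          rw [hrw] at hkey
          exact le_of_mul_le_mul_right hkey hmpos
        have h2 : (m:ℝ)^c * (k:ℝ)^(m-1) ≤ (m:ℝ)^(m+c-2) * ((ℓ:ℝ)+1)^(m-1) := by
          have hrw2 : m + c - 2 = c + (m - 2) := by omega
          rw [hrw2, pow_add]
          calc (m:ℝ)^c * (k:ℝ)^(m-1) ≤ (m:ℝ)^c * ((m:ℝ)^(m-2) * ((ℓ:ℝ)+1)^(m-1)) :=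
              mul_le_mul_of_nonneg_left h1 (by positivity)
            _ = (m:ℝ)^c * (m:ℝ)^(m-2) * ((ℓ:ℝ)+1)^(m-1) := by ring
        calc (Nat.card XT : ℝ)
            ≤ (∏ K, ((Υ.filter fun v => fm F K0 v = K).card : ℝ)) *
              ((m:ℝ) ^ c * (k:ℝ) ^ (m - 1)) := hcountR
          _ ≤ ((ℓ:ℝ)/(c:ℝ))^c * ((m:ℝ)^(m+c-2) * ((ℓ:ℝ)+1)^(m-1)) := by
              apply mul_le_mul hGM h2 (by positivity) (by positivity)
          _ = ((ℓ:ℝ)/(c:ℝ))^c * (m:ℝ)^(m+c-2) * ((ℓ:ℝ)+1)^(m-1) := by ring
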